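/- (Easy direction of the distance formula.) Let C ⊆ ℝᵐ ∖ {0} be a cone and F : C ∪ {0} → [0,∞) continuous with F(0) = 0. Then for every C¹ F-steep function f : ℝᵐ → ℝ (df_x(y) ≥ F(y) for all x and all y ∈ C) and all p, q ∈ ℝᵐ, one has d(p, q) ≤ max(f(q) − f(p), 0); consequently d(p,q) ≤ inf over all C¹ F-steep f of [f(q) − f(p)]⁺. -/

import Mathlib

open MeasureTheory

/-- A (continuous) causal curve from `p` to `q` parametrized on `[0,1]`: a Lipschitz curve
with almost-everywhere derivative in `C ∪ {0}`.  (Lipschitz curves in `ℝᵐ` are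
differentiable almost everywhere, and Lean's `deriv` has junk value `0 ∈ C ∪ {0}`
at points of non-differentiability.) -/
def IsCausalCurve {m : ℕ} (C : Set (EuclideanSpace ℝ (Fin m)))
    (p q : EuclideanSpace ℝ (Fin m)) (x : ℝ → EuclideanSpace ℝ (Fin m)) : Prop :=
  (∃ K : NNReal, LipschitzOnWith K x (Set.Icc 0 1)) ∧ x 0 = p ∧ x 1 = q ∧
    ∀ᵐ t ∂volume, t ∈ Set.Icc (0 : ℝ) 1 → deriv x t ∈ C ∪ {0}

/-- The `F`-length `ℓ(x) = ∫ F(x′(t)) dt` of a curve parametrized on `[0,1]`. -/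
noncomputable def FLength {m : ℕ} (F : EuclideanSpace ℝ (Fin m) → ℝ)
    (x : ℝ → EuclideanSpace ℝ (Fin m)) : ENNReal :=
  ∫⁻ t in Set.Icc (0 : ℝ) 1, ENNReal.ofReal (F (deriv x t))

/-- The Lorentz–Finsler distance `d(p,q) = sup { ℓ(x) : x causal curve from p to q }`,
valued in `[0,∞]`, with `sup ∅ = 0`. -/
noncomputable def FLdist {m : ℕ} (C : Set (EuclideanSpace ℝ (Fin m)))
    (F : EuclideanSpace ℝ (Fin m) → ℝ) (p q : EuclideanSpace ℝ (Fin m)) : ENNReal :=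
  ⨆ x ∈ {x : ℝ → EuclideanSpace ℝ (Fin m) | IsCausalCurve C p q x}, FLength F x

section Aux
open Set Filter intervalIntegral Topology

/-- Key integral computation for the difference-quotient trick. -/
lemma key_step {h : ℝ → ℝ} {K : NNReal} (hl : LipschitzOnWith K h (Set.Icc 0 1))
    {c : ℝ} (hc : 0 < c) (hc1 : c ≤ 1) :
    |(∫ t in (0:ℝ)..1, (h (min (t + c) 1) - h t)) - c * (h 1 - h 0)| ≤ K * c * c := by
  have hcont : ContinuousOn h (Set.Icc 0 1) := hl.continuousOn
  have hint : ∀ a b : ℝ, a ∈ Set.Icc (0:ℝ) 1 → b ∈ Set.Icc (0:ℝ) 1 →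
      IntervalIntegrable h volume a b := by
    intro a b ha hb
    apply ContinuousOn.intervalIntegrable
    apply hcont.mono
    rw [Set.uIcc_eq_union]
    exact Set.union_subset (Set.Icc_subset_Icc ha.1 hb.2) (Set.Icc_subset_Icc hb.1 ha.2)
  have m0 : (0:ℝ) ∈ Set.Icc (0:ℝ) 1 := by constructor <;> norm_num
  have m1 : (1:ℝ) ∈ Set.Icc (0:ℝ) 1 := by constructor <;> norm_num
  have mc : c ∈ Set.Icc (0:ℝ) 1 := ⟨hc.le, hc1⟩
  have m1c : 1 - c ∈ Set.Icc (0:ℝ) 1 := ⟨by linarith, by linarith⟩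
  set φ : ℝ → ℝ := fun t => h (min (t + c) 1) - h t with hφ
  have hmem : ∀ t ∈ Set.Icc (0:ℝ) 1, min (t + c) 1 ∈ Set.Icc (0:ℝ) 1 := by
    intro t ht
    exact ⟨le_min (by linarith [ht.1]) zero_le_one, min_le_right _ _⟩
  have hφcont : ContinuousOn φ (Set.Icc 0 1) := by
    apply ContinuousOn.sub _ hcont
    exact hcont.comp (Continuous.continuousOn (by continuity)) hmem
  have hφint : ∀ a b : ℝ, a ∈ Set.Icc (0:ℝ) 1 → b ∈ Set.Icc (0:ℝ) 1 →
      IntervalIntegrable φ volume a b := by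
    intro a b ha hb
    apply ContinuousOn.intervalIntegrable
    apply hφcont.mono
    rw [Set.uIcc_eq_union]
    exact Set.union_subset (Set.Icc_subset_Icc ha.1 hb.2) (Set.Icc_subset_Icc hb.1 ha.2)
  have hcint : IntervalIntegrable (fun t => h (t + c)) volume 0 (1 - c) := by
    apply ContinuousOn.intervalIntegrable
    apply hcont.comp (Continuous.continuousOn (by continuity))
    intro t ht
    rw [Set.uIcc_of_le (by linarith : (0:ℝ) ≤ 1 - c)] at ht
    show t + c ∈ Set.Icc (0:ℝ) 1
    exact ⟨by linarith [ht.1], by linarith [ht.2]⟩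
  have A0 : ∫ t in (0:ℝ)..1, φ t
      = (∫ t in (0:ℝ)..(1 - c), φ t) + ∫ t in (1 - c)..1, φ t :=
    (integral_add_adjacent_intervals (hφint 0 (1 - c) m0 m1c) (hφint (1 - c) 1 m1c m1)).symm
  have A1 : ∫ t in (0:ℝ)..(1 - c), φ t
      = (∫ t in (0:ℝ)..(1 - c), h (t + c)) - ∫ t in (0:ℝ)..(1 - c), h t := by
    rw [← integral_sub hcint (hint 0 (1 - c) m0 m1c)]
    apply integral_congr
    intro t ht
    rw [Set.uIcc_of_le (by linarith : (0:ℝ) ≤ 1 - c)] at ht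
    simp only [hφ, min_eq_left (by linarith [ht.2] : t + c ≤ 1)]
  have A1' : ∫ t in (0:ℝ)..(1 - c), h (t + c) = ∫ t in c..1, h t := by
    have := integral_comp_add_right (a := 0) (b := 1 - c) (d := c) h
    simpa using this
  have A2 : ∫ t in (1 - c)..1, φ t = c * h 1 - ∫ t in (1 - c)..1, h t := by
    have e : ∫ t in (1 - c)..1, φ t = ∫ t in (1 - c)..1, (h 1 - h t) := by
      apply integral_congr
      intro t ht
      rw [Set.uIcc_of_le (by linarith : 1 - c ≤ (1:ℝ))] at ht
      simp only [hφ, min_eq_right (by linarith [ht.1] : (1:ℝ) ≤ t + c)]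
    rw [e, integral_sub intervalIntegrable_const (hint (1 - c) 1 m1c m1), intervalIntegral.integral_const]
    simp only [smul_eq_mul]
    ring_nf
  have B1 : (∫ t in (0:ℝ)..c, h t) + ∫ t in c..1, h t = ∫ t in (0:ℝ)..1, h t :=
    integral_add_adjacent_intervals (hint 0 c m0 mc) (hint c 1 mc m1)
  have B2 : (∫ t in (0:ℝ)..(1 - c), h t) + ∫ t in (1 - c)..1, h t = ∫ t in (0:ℝ)..1, h t :=
    integral_add_adjacent_intervals (hint 0 (1 - c) m0 m1c) (hint (1 - c) 1 m1c m1)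
  have C1 : (∫ t in (0:ℝ)..c, (h 0 - h t)) = c * h 0 - ∫ t in (0:ℝ)..c, h t := by
    rw [integral_sub intervalIntegrable_const (hint 0 c m0 mc), intervalIntegral.integral_const]
    simp only [smul_eq_mul]
    ring_nf
  have key : (∫ t in (0:ℝ)..1, φ t) - c * (h 1 - h 0) = ∫ t in (0:ℝ)..c, (h 0 - h t) := by
    rw [A0, A1, A1', A2, C1]
    linarith
  rw [← Real.norm_eq_abs, key]
  have bound : ∀ t ∈ Set.uIoc (0:ℝ) c, ‖h 0 - h t‖ ≤ (K : ℝ) * c := by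
    intro t ht
    rw [Set.uIoc_of_le hc.le] at ht
    have htm : t ∈ Set.Icc (0:ℝ) 1 := ⟨ht.1.le, ht.2.trans hc1⟩
    have := hl.dist_le_mul t htm 0 m0
    rw [Real.dist_eq, Real.dist_eq] at this
    have h2 : |t - 0| ≤ c := by rw [abs_of_nonneg (by linarith [ht.1])]; linarith [ht.2]
    calc ‖h 0 - h t‖ = |h t - h 0| := by rw [Real.norm_eq_abs, abs_sub_comm]
      _ ≤ (K : ℝ) * |t - 0| := this
      _ ≤ (K : ℝ) * c := by nlinarith [h2, (K : ℝ).toNNReal.coe_nonneg, NNReal.coe_nonneg K]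
  calc ‖∫ t in (0:ℝ)..c, (h 0 - h t)‖ ≤ (K : ℝ) * c * |c - 0| :=
        norm_integral_le_of_norm_le_const bound
    _ = (K : ℝ) * c * c := by rw [sub_zero, abs_of_pos hc]

/-- Fundamental theorem of calculus for Lipschitz functions on `[0,1]`, via the
difference-quotient trick and dominated convergence. -/
lemma lipschitzOn_integral_deriv {h : ℝ → ℝ} {K : NNReal}
    (hl : LipschitzOnWith K h (Set.Icc 0 1)) :
    ∫ t in Set.Icc (0:ℝ) 1, deriv h t = h 1 - h 0 := by
  set μ := volume.restrict (Set.Icc (0:ℝ) 1) with hμ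
  haveI : IsFiniteMeasure μ := by
    constructor
    rw [hμ, Measure.restrict_apply_univ]
    exact measure_Icc_lt_top
  set c : ℕ → ℝ := fun n => 1 / (n + 1) with hcdef
  have hcpos : ∀ n, 0 < c n := fun n => by positivity
  have hc1 : ∀ n, c n ≤ 1 := by
    intro n
    rw [hcdef]
    simp only
    rw [div_le_one (by positivity)]
    linarith [Nat.cast_nonneg (α := ℝ) n]
  have hctend : Filter.Tendsto c atTop (𝓝 0) := tendsto_one_div_add_atTop_nhds_zero_nat
  set D : ℕ → ℝ → ℝ := fun n t => (h (min (t + c n) 1) - h t) / c n with hD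
  have hcont : ContinuousOn h (Set.Icc 0 1) := hl.continuousOn
  have hDmeas : ∀ n, AEStronglyMeasurable (D n) μ := by
    intro n
    apply ContinuousOn.aestronglyMeasurable _ measurableSet_Icc
    apply ContinuousOn.div_const
    apply ContinuousOn.sub _ hcont
    apply hcont.comp (Continuous.continuousOn (by continuity))
    intro t ht
    show min (t + c n) 1 ∈ Set.Icc (0:ℝ) 1
    exact ⟨le_min (by linarith [ht.1, (hcpos n)]) zero_le_one, min_le_right _ _⟩
  have hbound : ∀ n, ∀ᵐ t ∂μ, ‖D n t‖ ≤ (K:ℝ) := by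
    intro n
    filter_upwards [ae_restrict_mem measurableSet_Icc] with t ht
    have hmm : min (t + c n) 1 ∈ Set.Icc (0:ℝ) 1 :=
      ⟨le_min (by linarith [ht.1, hcpos n]) zero_le_one, min_le_right _ _⟩
    have hd := hl.dist_le_mul _ hmm _ ht
    rw [Real.dist_eq, Real.dist_eq] at hd
    have hge : t ≤ min (t + c n) 1 := le_min (by linarith [hcpos n]) ht.2
    have hle : min (t + c n) 1 - t ≤ c n := by
      have := min_le_left (t + c n) 1
      linarith
    have h1 : |min (t + c n) 1 - t| ≤ c n := by
      rw [abs_of_nonneg (by linarith)]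
      exact hle
    rw [hD]
    simp only
    rw [Real.norm_eq_abs, abs_div, abs_of_pos (hcpos n), div_le_iff₀ (hcpos n)]
    calc |h (min (t + c n) 1) - h t| ≤ (K:ℝ) * |min (t + c n) 1 - t| := hd
      _ ≤ (K:ℝ) * c n := by nlinarith [NNReal.coe_nonneg K]
  have hrad : ∀ᵐ t ∂volume, t ∈ Set.Ioo (0:ℝ) 1 →
      DifferentiableWithinAt ℝ h (Set.Ioo 0 1) t :=
    (hl.mono Set.Ioo_subset_Icc_self).ae_differentiableWithinAt_of_mem
  have hioo : ∀ᵐ t ∂μ, t ∈ Set.Ioo (0:ℝ) 1 := by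
    have hz : μ ({0, 1} : Set ℝ) = 0 := by
      apply le_antisymm _ (zero_le)
      calc μ ({0, 1} : Set ℝ) ≤ volume ({0, 1} : Set ℝ) := Measure.restrict_apply_le _ _
        _ = 0 := by
          rw [Set.insert_eq]
          refine le_antisymm (le_trans (measure_union_le _ _) ?_) (zero_le)
          simp
    filter_upwards [ae_restrict_mem measurableSet_Icc,
      (measure_eq_zero_iff_ae_notMem).mp hz] with t ht hne
    simp only [Set.mem_insert_iff, Set.mem_singleton_iff, not_or] at hne
    exact ⟨ht.1.lt_of_ne (Ne.symm hne.1), ht.2.lt_of_ne hne.2⟩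
  have hconv : ∀ᵐ t ∂μ, Filter.Tendsto (fun n => D n t) atTop (𝓝 (deriv h t)) := by
    filter_upwards [hioo, ae_restrict_of_ae hrad] with t ht hdiff
    have hdA : DifferentiableAt ℝ h t :=
      (hdiff ht).differentiableAt (Ioo_mem_nhds ht.1 ht.2)
    have hda := hdA.hasDerivAt
    rw [hasDerivAt_iff_tendsto_slope] at hda
    have h1 : Filter.Tendsto (fun n => t + c n) atTop (𝓝[≠] t) := by
      apply tendsto_nhdsWithin_of_tendsto_nhds_of_eventually_within
      · have := hctend.const_add t
        simp only [add_zero] at this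
        exact this
      · exact Filter.Eventually.of_forall fun n => by
          simp only [Set.mem_compl_iff, Set.mem_singleton_iff]
          linarith [hcpos n]
    have h2 := hda.comp h1
    apply h2.congr'
    have hev : ∀ᶠ n in atTop, c n < 1 - t := hctend.eventually_lt_const (by linarith [ht.2])
    filter_upwards [hev] with n hn
    show slope h t (t + c n) = D n t
    rw [slope_def_field, hD]
    simp only
    rw [min_eq_left (by linarith)]
    congr 1
    ring
  have hDCT := tendsto_integral_of_dominated_convergence (F := D) (f := deriv h)
    (bound := fun _ => (K:ℝ)) hDmeas (integrable_const _) hbound hconv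
  have hlim2 : Filter.Tendsto (fun n => ∫ t, D n t ∂μ) atTop (𝓝 (h 1 - h 0)) := by
    have heq : ∀ n, ∫ t, D n t ∂μ
        = (∫ t in (0:ℝ)..1, (h (min (t + c n) 1) - h t)) / c n := by
      intro n
      rw [hD]
      simp only
      rw [MeasureTheory.integral_div]
      congr 1
      rw [hμ, intervalIntegral.integral_of_le zero_le_one,
        ← MeasureTheory.integral_Icc_eq_integral_Ioc]
    have hsq : Filter.Tendsto (fun n => (∫ t, D n t ∂μ) - (h 1 - h 0)) atTop (𝓝 0) := by
      apply squeeze_zero_norm (a := fun n => (K:ℝ) * c n)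
      · intro n
        rw [heq n]
        have hk := key_step hl (hcpos n) (hc1 n)
        have e : (∫ t in (0:ℝ)..1, (h (min (t + c n) 1) - h t)) / c n - (h 1 - h 0)
            = ((∫ t in (0:ℝ)..1, (h (min (t + c n) 1) - h t)) - c n * (h 1 - h 0)) / c n := by
          rw [sub_div, mul_div_cancel_left₀ _ (hcpos n).ne']
        rw [e, Real.norm_eq_abs, abs_div, abs_of_pos (hcpos n), div_le_iff₀ (hcpos n)]
        calc |(∫ t in (0:ℝ)..1, (h (min (t + c n) 1) - h t)) - c n * (h 1 - h 0)|
            ≤ (K:ℝ) * c n * c n := hk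
          _ = (K:ℝ) * c n * c n := by ring
      · have := hctend.const_mul (K:ℝ)
        simp only [mul_zero] at this
        exact this
    have := hsq.add_const (h 1 - h 0)
    simpa using this
  exact tendsto_nhds_unique hDCT hlim2

end Aux

/-- easy direction of the distance formula: Let `C ⊆ ℝᵐ ∖ {0}` be a cone
and `F : C ∪ {0} → [0,∞)` continuous with `F 0 = 0`.  Then for every `C¹` `F`-steep
function `f` (`df_x(y) ≥ F y` for all `x` and all `y ∈ C`) and all `p, q`, one has
`d(p,q) ≤ [f q − f p]⁺`; consequently `d(p,q) ≤ inf` over all `C¹` `F`-steep `f` of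
`[f q − f p]⁺`. -/
theorem stmt_19 {m : ℕ} (C : Set (EuclideanSpace ℝ (Fin m)))
    (hC0 : (0 : EuclideanSpace ℝ (Fin m)) ∉ C) (hCne : C.Nonempty)
    (hcone : ∀ y ∈ C, ∀ l : ℝ, 0 < l → l • y ∈ C)
    (F : EuclideanSpace ℝ (Fin m) → ℝ)
    (hFc : ContinuousOn F (C ∪ {0})) (hF0 : F 0 = 0)
    (hFnn : ∀ y ∈ C ∪ {0}, 0 ≤ F y)
    (p q : EuclideanSpace ℝ (Fin m)) :
    (∀ f : EuclideanSpace ℝ (Fin m) → ℝ, ContDiff ℝ 1 f →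
      (∀ x : EuclideanSpace ℝ (Fin m), ∀ y ∈ C, F y ≤ fderiv ℝ f x y) →
      FLdist C F p q ≤ ENNReal.ofReal (max (f q - f p) 0)) ∧
    FLdist C F p q ≤
      ⨅ f ∈ {f : EuclideanSpace ℝ (Fin m) → ℝ | ContDiff ℝ 1 f ∧
        ∀ x : EuclideanSpace ℝ (Fin m), ∀ y ∈ C, F y ≤ fderiv ℝ f x y},
        ENNReal.ofReal (max (f q - f p) 0) := by
  have main : ∀ f : EuclideanSpace ℝ (Fin m) → ℝ, ContDiff ℝ 1 f →
      (∀ x : EuclideanSpace ℝ (Fin m), ∀ y ∈ C, F y ≤ fderiv ℝ f x y) →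
      FLdist C F p q ≤ ENNReal.ofReal (max (f q - f p) 0) := by
    intro f hf hsteep
    rw [FLdist]
    refine iSup₂_le fun x hx => ?_
    obtain ⟨⟨Kx, hKx⟩, hx0, hx1, hxc⟩ := hx
    set μ := volume.restrict (Set.Icc (0:ℝ) 1) with hμ
    haveI : IsFiniteMeasure μ := by
      constructor
      rw [hμ, MeasureTheory.Measure.restrict_apply_univ]
      exact measure_Icc_lt_top
    -- `f` is Lipschitz on a closed ball containing the image of the curve
    have hScomp : IsCompact (x '' Set.Icc 0 1) := isCompact_Icc.image_of_continuousOn hKx.continuousOn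
    obtain ⟨R, hR⟩ := hScomp.isBounded.subset_closedBall 0
    have hfd : Differentiable ℝ f := hf.differentiable one_ne_zero
    have hfc : Continuous (fderiv ℝ f) := hf.continuous_fderiv one_ne_zero
    obtain ⟨M, hM⟩ := (isCompact_closedBall (0 : EuclideanSpace ℝ (Fin m)) R).exists_bound_of_continuousOn hfc.continuousOn
    set Kf : NNReal := Real.toNNReal M with hKf
    have hfL : LipschitzOnWith Kf f (Metric.closedBall 0 R) := by
      apply (convex_closedBall (0 : EuclideanSpace ℝ (Fin m)) R).lipschitzOnWith_of_nnnorm_hasFDerivWithin_le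
        (f' := fderiv ℝ f) (fun y hy => (hfd y).hasFDerivAt.hasFDerivWithinAt)
      intro y hy
      rw [← norm_toNNReal, hKf]
      exact Real.toNNReal_mono (hM y hy)
    set h : ℝ → ℝ := f ∘ x with hh
    have hhL : LipschitzOnWith (Kf * Kx) h (Set.Icc 0 1) :=
      hfL.comp hKx fun t ht => hR (Set.mem_image_of_mem x ht)
    -- a.e. pointwise facts
    have hradx : ∀ᵐ t ∂volume, t ∈ Set.Ioo (0:ℝ) 1 →
        DifferentiableWithinAt ℝ x (Set.Ioo 0 1) t :=
      (hKx.mono Set.Ioo_subset_Icc_self).ae_differentiableWithinAt_of_mem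
    have hioo : ∀ᵐ t ∂μ, t ∈ Set.Ioo (0:ℝ) 1 := by
      have hz : μ ({0, 1} : Set ℝ) = 0 := by
        apply le_antisymm _ (zero_le)
        calc μ ({0, 1} : Set ℝ) ≤ volume ({0, 1} : Set ℝ) :=
              MeasureTheory.Measure.restrict_apply_le _ _
          _ = 0 := by
            rw [Set.insert_eq]
            refine le_antisymm (le_trans (measure_union_le _ _) ?_) (zero_le)
            simp
      filter_upwards [MeasureTheory.ae_restrict_mem measurableSet_Icc,
        measure_eq_zero_iff_ae_notMem.mp hz] with t ht hne
      simp only [Set.mem_insert_iff, Set.mem_singleton_iff, not_or] at hne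
      exact ⟨ht.1.lt_of_ne (Ne.symm hne.1), ht.2.lt_of_ne hne.2⟩
    set g : ℝ → ℝ := deriv h with hg
    have hae : ∀ᵐ t ∂μ, F (deriv x t) ≤ g t ∧ 0 ≤ g t := by
      filter_upwards [hioo, MeasureTheory.ae_restrict_of_ae hradx,
        MeasureTheory.ae_restrict_of_ae hxc,
        MeasureTheory.ae_restrict_mem measurableSet_Icc] with t ht hdx hc htIcc
      have hdxa : DifferentiableAt ℝ x t :=
        (hdx ht).differentiableAt (Ioo_mem_nhds ht.1 ht.2)
      have hder : HasDerivAt h (fderiv ℝ f (x t) (deriv x t)) t :=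
        (hfd (x t)).hasFDerivAt.comp_hasDerivAt t hdxa.hasDerivAt
      have hgval : g t = fderiv ℝ f (x t) (deriv x t) := hder.deriv
      rcases hc htIcc with hmem | hmem
      · refine ⟨by rw [hgval]; exact hsteep (x t) _ hmem, ?_⟩
        rw [hgval]
        exact le_trans (hFnn _ (Set.mem_union_left _ hmem)) (hsteep (x t) _ hmem)
      · rw [Set.mem_singleton_iff] at hmem
        rw [hgval, hmem, map_zero, hF0]
        exact ⟨le_rfl, le_rfl⟩
    -- integrability of g
    have hgmeas : Measurable g := measurable_deriv h
    have hgbdd : ∀ᵐ t ∂μ, ‖g t‖ ≤ ((Kf * Kx : NNReal) : ℝ) := by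
      filter_upwards [hioo] with t ht
      by_cases hd : DifferentiableAt ℝ h t
      · have hfd' : ‖fderiv ℝ h t‖ ≤ ((Kf * Kx : NNReal) : ℝ) :=
          norm_fderiv_le_of_lipschitzOn ℝ (Icc_mem_nhds ht.1 ht.2) hhL
        have : g t = fderiv ℝ h t 1 := rfl
        rw [this]
        calc ‖fderiv ℝ h t 1‖ ≤ ‖fderiv ℝ h t‖ * ‖(1:ℝ)‖ := (fderiv ℝ h t).le_opNorm 1
          _ ≤ ((Kf * Kx : NNReal) : ℝ) := by rw [norm_one, mul_one]; exact hfd'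
      · rw [hg, deriv_zero_of_not_differentiableAt hd]
        simp only [norm_zero]
        positivity
    have hgint : MeasureTheory.Integrable g μ := by
      refine ⟨hgmeas.aestronglyMeasurable, ?_⟩
      exact MeasureTheory.HasFiniteIntegral.of_bounded hgbdd
    -- the chain of inequalities
    have step1 : FLength F x ≤ ∫⁻ t in Set.Icc (0:ℝ) 1, ENNReal.ofReal (g t) := by
      rw [FLength]
      refine MeasureTheory.lintegral_mono_ae ?_
      filter_upwards [hae] with t ht
      exact ENNReal.ofReal_le_ofReal ht.1
    have step2 : ∫⁻ t in Set.Icc (0:ℝ) 1, ENNReal.ofReal (g t)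
        = ENNReal.ofReal (∫ t in Set.Icc (0:ℝ) 1, g t) := by
      rw [MeasureTheory.ofReal_integral_eq_lintegral_ofReal hgint]
      filter_upwards [hae] with t ht using ht.2
    have step3 : ∫ t in Set.Icc (0:ℝ) 1, g t = f q - f p := by
      rw [hg, lipschitzOn_integral_deriv hhL, hh]
      simp only [Function.comp_apply, hx0, hx1]
    calc FLength F x ≤ ENNReal.ofReal (∫ t in Set.Icc (0:ℝ) 1, g t) := by
          rw [← step2]; exact step1
      _ = ENNReal.ofReal (f q - f p) := by rw [step3]
      _ ≤ ENNReal.ofReal (max (f q - f p) 0) :=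
          ENNReal.ofReal_le_ofReal (le_max_left _ _)
  exact ⟨main, le_iInf₂ fun f hf => main f hf.1 hf.2⟩
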